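/- The algebra homomorphism ∨ : F[z_1,z_2,...] → F[z_1,z_2,...] that sends z_n ↦ z^∨_n for n ≥ 1 is an algebra isomorphism. -/

import Mathlib

noncomputable section

open PowerSeries

variable (F : Type*) [Field F]

/-- The generators `z_n` of `F[z_1, z_2, …]` (with the convention `z_0 = 1`),
realized inside the polynomial algebra on countably many variables indexed by `ℕ+`. -/
def z : ℕ → MvPolynomial ℕ+ F
  | 0 => 1
  | (n + 1) => MvPolynomial.X ⟨n + 1, Nat.succ_pos n⟩

/-- The elements `z↓_n`:  `z↓_0 = 1` and for `n ≥ 1`,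
`z↓_n = ∑_{ℓ=0}^{⌊(n-1)/2⌋} (-1)^ℓ C(n-1-ℓ,ℓ) [2]_q^{-2ℓ} z_{n-2ℓ}`. -/
def zdown (q : F) : ℕ → MvPolynomial ℕ+ F
  | 0 => 1
  | (n + 1) => ∑ ℓ ∈ Finset.range (n / 2 + 1),
      ((-1 : F) ^ ℓ * (Nat.choose (n - ℓ) ℓ : F) * ((q + q⁻¹)⁻¹) ^ (2 * ℓ)) •
        z F (n + 1 - 2 * ℓ)

/-- The elements `z^∨_n = [2]_q^n ∑_{k=0}^n q^{n-2k} z↓_k z↓_{n-k}`. -/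
def zvee (q : F) (n : ℕ) : MvPolynomial ℕ+ F :=
  ((q + q⁻¹) ^ n) • ∑ k ∈ Finset.range (n + 1),
    (q ^ ((n : ℤ) - 2 * (k : ℤ))) • (zdown F q k * zdown F q (n - k))

/-- The algebra homomorphism `∨` sending `z_n ↦ z^∨_n` for `n ≥ 1`. -/
def veeHom (q : F) : MvPolynomial ℕ+ F →ₐ[F] MvPolynomial ℕ+ F :=
  MvPolynomial.aeval fun i : ℕ+ => zvee F q (i : ℕ)

namespace VeeAux

open MvPolynomial

/-- A surjective endomorphism of a Noetherian commutative ring is injective. -/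
theorem surj_endo_inj {A : Type*} [CommRing A] [IsNoetherianRing A]
    (f : A →+* A) (hf : Function.Surjective f) : Function.Injective f := by
  have hA : IsNoetherian A A := ‹IsNoetherianRing A›
  let g : ℕ → (A →+* A) := fun k => Nat.rec (RingHom.id A) (fun _ h => f.comp h) k
  have hgs : ∀ k, g (k+1) = f.comp (g k) := fun k => rfl
  have hsurj : ∀ k, Function.Surjective (g k) := by
    intro k; induction k with
    | zero => exact Function.surjective_id
    | succ k ih => exact hf.comp ih
  have hmono : Monotone (fun k => RingHom.ker (g k)) := by
    apply monotone_nat_of_le_succ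
    intro k x hx
    rw [RingHom.mem_ker] at hx ⊢
    rw [hgs, RingHom.comp_apply, hx, map_zero]
  obtain ⟨N, hN⟩ := monotone_stabilizes_iff_noetherian.mpr hA ⟨_, hmono⟩
  rw [injective_iff_map_eq_zero]
  intro a ha
  obtain ⟨b, hb⟩ := hsurj N a
  have hb1 : b ∈ RingHom.ker (g (N+1)) := by
    rw [RingHom.mem_ker, hgs, RingHom.comp_apply, hb, ha]
  have heq : RingHom.ker (g N) = RingHom.ker (g (N+1)) := hN (N+1) (Nat.le_succ N)
  rw [← heq] at hb1
  rw [← hb]; exact RingHom.mem_ker.mp hb1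

variable {F}

/-- The subalgebra of polynomials using only variables `z_1, …, z_n`. -/
def SS (n : ℕ) : Subalgebra F (MvPolynomial ℕ+ F) :=
  MvPolynomial.supported F {i : ℕ+ | (i : ℕ) ≤ n}

lemma SS_mono {m n : ℕ} (h : m ≤ n) : SS (F := F) m ≤ SS n :=
  supported_mono fun i hi => le_trans hi h

lemma X_mem_SS {n : ℕ} {i : ℕ+} (h : (i : ℕ) ≤ n) : MvPolynomial.X i ∈ SS (F := F) n := by
  rw [SS, supported_eq_adjoin_X]
  exact Algebra.subset_adjoin ⟨i, h, rfl⟩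

lemma z_mem {n k : ℕ} (h : k ≤ n) : z F k ∈ SS (F := F) n := by
  cases k with
  | zero => exact one_mem _
  | succ k => exact X_mem_SS h

lemma zdown_mem (q : F) {n k : ℕ} (h : k ≤ n) : zdown F q k ∈ SS n := by
  cases k with
  | zero => exact one_mem _
  | succ k =>
    rw [zdown]
    exact Subalgebra.sum_mem _ fun ℓ _ => Subalgebra.smul_mem _ (z_mem (by omega)) _

lemma zvee_mem (q : F) {n k : ℕ} (h : k ≤ n) : zvee F q k ∈ SS n := by
  rw [zvee]
  refine Subalgebra.smul_mem _ (Subalgebra.sum_mem _ fun j hj => Subalgebra.smul_mem _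
    (mul_mem (zdown_mem q ?_) (zdown_mem q ?_)) _) _
  · have := Finset.mem_range.mp hj; omega
  · omega

lemma zdown_succ_sub (q : F) (n : ℕ) : zdown F q (n+1) - z F (n+1) ∈ SS n := by
  rw [zdown, Finset.sum_range_succ']
  simp only [pow_zero, Nat.sub_zero, Nat.choose_zero_right, Nat.cast_one, mul_one, one_mul,
    Nat.mul_zero, one_smul]
  rw [add_sub_cancel_right]
  exact Subalgebra.sum_mem _ fun i _ => Subalgebra.smul_mem _ (z_mem (by omega)) _

lemma zvee_succ_sub (q : F) (n : ℕ) :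
    zvee F q (n+1)
      - ((q + q⁻¹) ^ (n+1) * (q ^ (((n+1 : ℕ) : ℤ)) + q ^ (-((n+1 : ℕ) : ℤ)))) • z F (n+1)
      ∈ SS n := by
  have hz0 : zdown F q 0 = 1 := rfl
  have em : (((n+1 : ℕ)) : ℤ) - 2 * (((n+1 : ℕ)) : ℤ) = -(((n+1 : ℕ)) : ℤ) := by ring
  have e0 : (((n+1 : ℕ)) : ℤ) - 2 * (((0 : ℕ)) : ℤ) = (((n+1 : ℕ)) : ℤ) := by
    push_cast; ring
  rw [zvee, Finset.sum_range_succ, Finset.sum_range_succ']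
  simp only [hz0, one_mul, mul_one, Nat.sub_zero, Nat.sub_self, e0, em]
  have key : ((q + q⁻¹) ^ (n+1)) •
        ((∑ i ∈ Finset.range n,
            (q ^ ((((n+1:ℕ)) : ℤ) - 2 * (((i+1 : ℕ)) : ℤ))) •
              (zdown F q (i+1) * zdown F q (n+1 - (i+1)))) +
          (q ^ ((((n+1:ℕ)) : ℤ))) • zdown F q (n+1) +
          (q ^ (-(((n+1:ℕ)) : ℤ))) • zdown F q (n+1))
      - ((q + q⁻¹) ^ (n+1) * (q ^ (((n+1 : ℕ) : ℤ)) + q ^ (-((n+1 : ℕ) : ℤ)))) • z F (n+1)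
    = ((q + q⁻¹) ^ (n+1)) •
        ((∑ i ∈ Finset.range n,
            (q ^ ((((n+1:ℕ)) : ℤ) - 2 * (((i+1 : ℕ)) : ℤ))) •
              (zdown F q (i+1) * zdown F q (n+1 - (i+1)))) +
          (q ^ (((n+1 : ℕ) : ℤ)) + q ^ (-((n+1 : ℕ) : ℤ))) • (zdown F q (n+1) - z F (n+1))) := by
    module
  rw [key]
  refine Subalgebra.smul_mem _ (add_mem (Subalgebra.sum_mem _ fun i hi => Subalgebra.smul_mem _
    (mul_mem (zdown_mem q ?_) (zdown_mem q ?_)) _) (Subalgebra.smul_mem _ (zdown_succ_sub q n) _)) _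
  · have := Finset.mem_range.mp hi; omega
  · have := Finset.mem_range.mp hi; omega

end VeeAux

namespace VeeAux

open MvPolynomial

variable {F}

lemma two_q_ne_zero {q : F} (hq0 : q ≠ 0) (hq : ∀ n : ℕ, 0 < n → q ^ n ≠ 1) :
    q + q⁻¹ ≠ 0 := by
  intro hcon
  have e : q * (q + q⁻¹) = 0 := by rw [hcon, mul_zero]
  rw [mul_add, mul_inv_cancel₀ hq0] at e
  exact hq 4 (by norm_num) (by linear_combination (q * q - 1) * e)

lemma qm_ne_zero {q : F} (hq0 : q ≠ 0) (hq : ∀ n : ℕ, 0 < n → q ^ n ≠ 1) (m : ℕ) (hm : 0 < m) :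
    q ^ ((m : ℤ)) + q ^ (-(m : ℤ)) ≠ 0 := by
  intro hcon
  have hQ : q ^ m ≠ 0 := pow_ne_zero _ hq0
  rw [zpow_neg, zpow_natCast] at hcon
  have e : q ^ m * (q ^ m + (q ^ m)⁻¹) = 0 := by rw [hcon, mul_zero]
  rw [mul_add, mul_inv_cancel₀ hQ] at e
  have : q ^ (4 * m) = 1 := by
    have h4 : q ^ (4 * m) = (q ^ m) ^ 4 := by rw [← pow_mul, mul_comm]
    rw [h4]
    linear_combination (q ^ m * q ^ m - 1) * e
  exact hq (4 * m) (by omega) this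

lemma key_le (q : F) (hq0 : q ≠ 0) (hq : ∀ n : ℕ, 0 < n → q ^ n ≠ 1) :
    ∀ n, SS (F := F) n ≤ (SS n).map (veeHom F q) := by
  intro n
  induction n with
  | zero =>
    have hempty : {i : ℕ+ | (i : ℕ) ≤ 0} = (∅ : Set ℕ+) := by
      ext i
      simp only [Set.mem_setOf_eq, Set.mem_empty_iff_false, iff_false]
      have := i.pos; omega
    rw [SS, hempty, supported_empty]
    exact bot_le
  | succ n ih =>
    rw [SS, supported_eq_adjoin_X, Algebra.adjoin_le_iff]
    rintro x ⟨i, hi, rfl⟩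
    simp only [Set.mem_setOf_eq] at hi
    rcases Nat.lt_or_ge (i : ℕ) (n + 1) with h | h
    · exact Subalgebra.map_mono (SS_mono (Nat.le_succ n))
        (ih (X_mem_SS (Nat.lt_succ_iff.mp h)))
    · have hieq : (i : ℕ) = n + 1 := le_antisymm hi h
      have hi' : i = ⟨n + 1, Nat.succ_pos n⟩ := Subtype.ext hieq
      set c : F := (q + q⁻¹) ^ (n+1) * (q ^ (((n+1 : ℕ) : ℤ)) + q ^ (-((n+1 : ℕ) : ℤ))) with hc
      have hcne : c ≠ 0 :=
        mul_ne_zero (pow_ne_zero _ (two_q_ne_zero hq0 hq)) (qm_ne_zero hq0 hq (n+1) (Nat.succ_pos n))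
      set r : MvPolynomial ℕ+ F := zvee F q (n+1) - c • z F (n+1) with hr
      have hrmem : r ∈ SS n := zvee_succ_sub q n
      have hzX : z F (n+1) = MvPolynomial.X i := by rw [hi']; rfl
      have hXeq : MvPolynomial.X i = c⁻¹ • (zvee F q (n+1) - r) := by
        rw [hr, sub_sub_cancel, ← hzX, smul_smul, inv_mul_cancel₀ hcne, one_smul]
      rw [hXeq]
      have hzvee : zvee F q (n+1) ∈ (SS (n+1)).map (veeHom F q) := by
        refine ⟨MvPolynomial.X i, X_mem_SS (le_of_eq hieq), ?_⟩
        show (MvPolynomial.aeval fun j : ℕ+ => zvee F q (j : ℕ)) (MvPolynomial.X i) = _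
        rw [MvPolynomial.aeval_X, hieq]
      have hrmem' : r ∈ (SS (n+1)).map (veeHom F q) :=
        Subalgebra.map_mono (SS_mono (Nat.le_succ n)) (ih hrmem)
      exact Subalgebra.smul_mem _ (sub_mem hzvee hrmem') _

lemma map_SS_le (q : F) (n : ℕ) : (SS n).map (veeHom F q) ≤ SS (F := F) n := by
  have h1 : (SS (F := F) n).map (veeHom F q)
      = Algebra.adjoin F ((veeHom F q) '' (MvPolynomial.X '' {i : ℕ+ | (i : ℕ) ≤ n})) := by
    rw [SS, supported_eq_adjoin_X, AlgHom.map_adjoin]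
  rw [h1, Algebra.adjoin_le_iff]
  rintro x ⟨-, ⟨i, hi, rfl⟩, rfl⟩
  show (MvPolynomial.aeval fun j : ℕ+ => zvee F q (j : ℕ)) (MvPolynomial.X i) ∈ SS n
  rw [MvPolynomial.aeval_X]
  exact zvee_mem q hi

end VeeAux

open VeeAux MvPolynomial in
/-- The map `∨ : F[z_1,z_2,…] → F[z_1,z_2,…]`, `z_n ↦ z^∨_n`, is an algebra isomorphism. -/
theorem veeHom_bijective (q : F) (hq0 : q ≠ 0) (hq : ∀ n : ℕ, 0 < n → q ^ n ≠ 1) :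
    Function.Bijective (veeHom F q) := by
  constructor
  · -- injectivity
    intro p₁ p₂ hpp
    set n : ℕ := max (p₁.vars.sup fun i => (i : ℕ)) (p₂.vars.sup fun i => (i : ℕ)) with hn
    have h1 : p₁ ∈ SS (F := F) n := mem_supported.mpr fun i hi =>
      le_trans (Finset.le_sup (f := fun i : ℕ+ => (i : ℕ)) (Finset.mem_coe.mp hi))
        (le_max_left _ _)
    have h2 : p₂ ∈ SS (F := F) n := mem_supported.mpr fun i hi =>
      le_trans (Finset.le_sup (f := fun i : ℕ+ => (i : ℕ)) (Finset.mem_coe.mp hi))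
        (le_max_right _ _)
    -- the restricted endomorphism of SS n
    let f' : SS (F := F) n →ₐ[F] SS (F := F) n :=
      AlgHom.codRestrict ((veeHom F q).comp (SS (F := F) n).val) (SS (F := F) n)
        (fun x => map_SS_le q n ⟨(x : MvPolynomial ℕ+ F), x.2, rfl⟩)
    have hsurj : Function.Surjective f' := by
      rintro ⟨y, hy⟩
      obtain ⟨x, hx, hfx⟩ := key_le q hq0 hq n hy
      exact ⟨⟨x, hx⟩, Subtype.ext hfx⟩
    have hfin : ({i : ℕ+ | (i : ℕ) ≤ n} : Set ℕ+).Finite := by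
      have : ({i : ℕ+ | (i : ℕ) ≤ n} : Set ℕ+) = ((↑) : ℕ+ → ℕ) ⁻¹' Set.Iic n := rfl
      rw [this]
      exact Set.Finite.preimage PNat.coe_injective.injOn (Set.finite_Iic n)
    haveI := hfin.to_subtype
    haveI : IsNoetherianRing (SS (F := F) n) :=
      isNoetherianRing_of_ringEquiv _
        (supportedEquivMvPolynomial {i : ℕ+ | (i : ℕ) ≤ n}).symm.toRingEquiv
    have hinj : Function.Injective f' := surj_endo_inj f'.toRingHom hsurj
    have : f' ⟨p₁, h1⟩ = f' ⟨p₂, h2⟩ := Subtype.ext hpp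
    exact congrArg Subtype.val (hinj this)
  · -- surjectivity
    intro p
    set n : ℕ := p.vars.sup fun i => (i : ℕ) with hn
    have hp : p ∈ SS (F := F) n := mem_supported.mpr fun i hi =>
      Finset.le_sup (f := fun i : ℕ+ => (i : ℕ)) (Finset.mem_coe.mp hi)
    obtain ⟨x, -, hx⟩ := key_le q hq0 hq n hp
    exact ⟨x, hx⟩
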